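/- Let G and H be connected graphs, f₁ = (A₀,A₁,A₂,A₃) a minimum-weight RDRD-function of G and f₂ = (B₀,B₁,B₂,B₃) a minimum-weight RDRD-function of H (where Aᵢ, Bᵢ are the sets of vertices assigned value i). Then γ_rdR(G ⊠ H) ≤ γ_rdR(G)·γ_rdR(H) − 6|A₃||B₃| − 3|A₃||B₂| − 2|A₃||B₁| − 3|A₂||B₃| − 2|A₂||B₂| − |A₂||B₁| − |A₁||B₂| − 2|A₁||B₃|. -/

import Mathlib

open SimpleGraph Finset

/-- A restrained double Roman dominating function. -/
def IsRDRD {α : Type*} (G : SimpleGraph α) (f : α → ℕ) : Prop :=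
  (∀ v, f v ≤ 3) ∧
  (∀ v, f v = 0 →
    (∃ u, G.Adj v u ∧ f u = 3) ∨
    (∃ u w, u ≠ w ∧ G.Adj v u ∧ G.Adj v w ∧ f u = 2 ∧ f w = 2)) ∧
  (∀ v, f v = 1 → ∃ u, G.Adj v u ∧ 2 ≤ f u) ∧
  (∀ v, f v = 0 → ∃ u, G.Adj v u ∧ f u = 0)

/-- The restrained double Roman domination number. -/
noncomputable def gammaRdR {α : Type*} (G : SimpleGraph α) [Fintype α] : ℕ :=
  sInf {w | ∃ f, IsRDRD G f ∧ ∑ v, f v = w}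

/-- The strong product of two simple graphs. -/
def strongProd {α β : Type*} (G : SimpleGraph α) (H : SimpleGraph β) :
    SimpleGraph (α × β) where
  Adj p q := p ≠ q ∧ (G.Adj p.1 q.1 ∨ p.1 = q.1) ∧ (H.Adj p.2 q.2 ∨ p.2 = q.2)
  symm := by
    constructor
    rintro p q ⟨h1, h2, h3⟩
    exact ⟨h1.symm, h2.imp (fun h => G.symm.symm _ _ h) Eq.symm, h3.imp (fun h => H.symm.symm _ _ h) Eq.symm⟩
  loopless := by constructor; rintro p ⟨h1, _⟩; exact h1 rfl

/-- The cardinal (direct/tensor) product of two simple graphs. -/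
def cardProd {α β : Type*} (G : SimpleGraph α) (H : SimpleGraph β) :
    SimpleGraph (α × β) where
  Adj p q := G.Adj p.1 q.1 ∧ H.Adj p.2 q.2
  symm := by constructor; rintro p q ⟨h1, h2⟩; exact ⟨h1.symm, h2.symm⟩
  loopless := by constructor; rintro p ⟨h1, _⟩; exact G.loopless.irrefl _ h1

/-- The corona of two simple graphs. -/
def corona {α β : Type*} (G : SimpleGraph α) (H : SimpleGraph β) :
    SimpleGraph (α ⊕ α × β) where
  Adj x y :=
    match x, y with
    | .inl u, .inl v => G.Adj u v
    | .inl u, .inr (v, _) => u = v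
    | .inr (v, _), .inl u => u = v
    | .inr (u, a), .inr (v, b) => u = v ∧ H.Adj a b
  symm := by
    constructor
    rintro (u | ⟨u, a⟩) (v | ⟨v, b⟩) h
    · exact h.symm
    · exact h
    · exact h
    · exact ⟨h.1.symm, h.2.symm⟩
  loopless := by
    constructor
    rintro (u | ⟨u, a⟩) h
    · exact G.loopless.irrefl _ h
    · exact H.loopless.irrefl _ h.2

/-- The combined value used to build an RDRD function on the strong product. -/
def gval (a b : ℕ) : ℕ := if a = 0 ∨ b = 0 then 0 else if a = 1 ∨ b = 1 then 1 else max a b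

lemma gval_zero {a b : ℕ} (h : gval a b = 0) : a = 0 ∨ b = 0 := by
  unfold gval at h; split_ifs at h <;> omega

lemma gval_ge2 {a b : ℕ} (ha : 2 ≤ a) (hb : 2 ≤ b) : 2 ≤ gval a b := by
  unfold gval; split_ifs <;> omega

lemma gval_one {a b : ℕ} (h : gval a b = 1) : (a = 1 ∧ 1 ≤ b) ∨ (b = 1 ∧ 1 ≤ a) := by
  unfold gval at h; split_ifs at h <;> omega

lemma gval_eq3l {a b : ℕ} (ha : a = 3) (hb : 2 ≤ b) (hb' : b ≤ 3) : gval a b = 3 := by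
  unfold gval; split_ifs <;> omega

lemma gval_eq3r {a b : ℕ} (ha : 2 ≤ a) (ha' : a ≤ 3) (hb : b = 3) : gval a b = 3 := by
  unfold gval; split_ifs <;> omega

lemma gval_eq2 {a b : ℕ} (ha : a = 2) (hb : b = 2) : gval a b = 2 := by
  unfold gval; split_ifs <;> omega

lemma gval_zl {a b : ℕ} (ha : a = 0) : gval a b = 0 := by
  unfold gval; split_ifs <;> omega

lemma gval_zr {a b : ℕ} (hb : b = 0) : gval a b = 0 := by
  unfold gval; split_ifs <;> omega

/-- Every vertex has, in its closed neighborhood, a vertex of value at least `2`. -/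
lemma closed_supply {α : Type*} {G : SimpleGraph α} {f : α → ℕ} (hf : IsRDRD G f) (v : α) :
    ∃ u, (G.Adj v u ∨ v = u) ∧ 2 ≤ f u := by
  obtain ⟨hb, h0, h1, _⟩ := hf
  rcases Nat.lt_or_ge (f v) 2 with hv | hv
  · interval_cases hfv : f v
    · rcases h0 v hfv with ⟨u, hu, h3⟩ | ⟨u, w, _, hu, _, h2, _⟩
      · exact ⟨u, Or.inl hu, by omega⟩
      · exact ⟨u, Or.inl hu, by omega⟩
    · obtain ⟨u, hu, h2⟩ := h1 v hfv
      exact ⟨u, Or.inl hu, h2⟩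
  · exact ⟨v, Or.inr rfl, hv⟩

/-- The `gval` combination of two RDRD functions is an RDRD function of the strong product. -/
lemma isRDRD_strongProd {α β : Type*} {G : SimpleGraph α} {H : SimpleGraph β}
    {f₁ : α → ℕ} {f₂ : β → ℕ} (h₁ : IsRDRD G f₁) (h₂ : IsRDRD H f₂) :
    IsRDRD (strongProd G H) (fun p => gval (f₁ p.1) (f₂ p.2)) := by
  have hb1 := h₁.1
  have hb2 := h₂.1
  refine ⟨?_, ?_, ?_, ?_⟩
  · rintro ⟨u, v⟩
    have := hb1 u; have := hb2 v
    simp only [gval]; split_ifs <;> simp <;> omega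
  · rintro ⟨u, v⟩ h0
    simp only at h0
    rcases gval_zero h0 with ha | hb
    · obtain ⟨v', hv', hv2⟩ := closed_supply h₂ v
      have hv3 := hb2 v'
      rcases h₁.2.1 u ha with ⟨u', hu', hu3⟩ | ⟨u₁, u₂, hne, had1, had2, h21, h22⟩
      · left
        exact ⟨(u', v'), ⟨fun he => hu'.ne (congrArg Prod.fst he), Or.inl hu', hv'⟩,
          gval_eq3l hu3 hv2 hv3⟩
      · by_cases h3 : f₂ v' = 3
        · left
          exact ⟨(u₁, v'), ⟨fun he => had1.ne (congrArg Prod.fst he), Or.inl had1, hv'⟩,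
            gval_eq3r (by dsimp only; omega) (by dsimp only; omega) h3⟩
        · right
          refine ⟨(u₁, v'), (u₂, v'), fun he => hne (congrArg Prod.fst he),
            ⟨fun he => had1.ne (congrArg Prod.fst he), Or.inl had1, hv'⟩,
            ⟨fun he => had2.ne (congrArg Prod.fst he), Or.inl had2, hv'⟩,
            gval_eq2 h21 (by dsimp only; omega), gval_eq2 h22 (by dsimp only; omega)⟩
    · obtain ⟨u', hu', hu2⟩ := closed_supply h₁ u
      have hu3 := hb1 u'
      rcases h₂.2.1 v hb with ⟨v', hv', hv3⟩ | ⟨v₁, v₂, hne, had1, had2, h21, h22⟩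
      · left
        exact ⟨(u', v'), ⟨fun he => hv'.ne (congrArg Prod.snd he), hu', Or.inl hv'⟩,
          gval_eq3r hu2 hu3 hv3⟩
      · by_cases h3 : f₁ u' = 3
        · left
          exact ⟨(u', v₁), ⟨fun he => had1.ne (congrArg Prod.snd he), hu', Or.inl had1⟩,
            gval_eq3l h3 (by dsimp only; omega) (by dsimp only; omega)⟩
        · right
          refine ⟨(u', v₁), (u', v₂), fun he => hne (congrArg Prod.snd he),
            ⟨fun he => had1.ne (congrArg Prod.snd he), hu', Or.inl had1⟩,
            ⟨fun he => had2.ne (congrArg Prod.snd he), hu', Or.inl had2⟩,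
            gval_eq2 (by dsimp only; omega) h21, gval_eq2 (by dsimp only; omega) h22⟩
  · rintro ⟨u, v⟩ h1
    simp only at h1
    rcases gval_one h1 with ⟨ha, hb⟩ | ⟨hb, ha⟩
    · obtain ⟨u', hu', hu2⟩ := h₁.2.2.1 u ha
      obtain ⟨v', hv', hv2⟩ := closed_supply h₂ v
      exact ⟨(u', v'), ⟨fun he => hu'.ne (congrArg Prod.fst he), Or.inl hu', hv'⟩,
        gval_ge2 hu2 hv2⟩
    · obtain ⟨v', hv', hv2⟩ := h₂.2.2.1 v hb
      obtain ⟨u', hu', hu2⟩ := closed_supply h₁ u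
      exact ⟨(u', v'), ⟨fun he => hv'.ne (congrArg Prod.snd he), hu', Or.inl hv'⟩,
        gval_ge2 hu2 hv2⟩
  · rintro ⟨u, v⟩ h0
    simp only at h0
    rcases gval_zero h0 with ha | hb
    · obtain ⟨u₀, hu₀, h0'⟩ := h₁.2.2.2 u ha
      exact ⟨(u₀, v), ⟨fun he => hu₀.ne (congrArg Prod.fst he), Or.inl hu₀, Or.inr rfl⟩,
        gval_zl h0'⟩
    · obtain ⟨v₀, hv₀, h0'⟩ := h₂.2.2.2 v hb
      exact ⟨(u, v₀), ⟨fun he => hv₀.ne (congrArg Prod.snd he), Or.inr rfl, Or.inl hv₀⟩,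
        gval_zr h0'⟩

lemma gval_point (a b : ℕ) (ha : a ≤ 3) (hb : b ≤ 3) :
    (a : ℤ) * b = (gval a b : ℤ)
      + 6 * ((if a = 3 then (1:ℤ) else 0) * (if b = 3 then (1:ℤ) else 0))
      + 3 * ((if a = 3 then (1:ℤ) else 0) * (if b = 2 then (1:ℤ) else 0))
      + 2 * ((if a = 3 then (1:ℤ) else 0) * (if b = 1 then (1:ℤ) else 0))
      + 3 * ((if a = 2 then (1:ℤ) else 0) * (if b = 3 then (1:ℤ) else 0))
      + 2 * ((if a = 2 then (1:ℤ) else 0) * (if b = 2 then (1:ℤ) else 0))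
      + ((if a = 2 then (1:ℤ) else 0) * (if b = 1 then (1:ℤ) else 0))
      + ((if a = 1 then (1:ℤ) else 0) * (if b = 2 then (1:ℤ) else 0))
      + 2 * ((if a = 1 then (1:ℤ) else 0) * (if b = 3 then (1:ℤ) else 0)) := by
  interval_cases a <;> interval_cases b <;> simp [gval]

theorem stmt2 {α β : Type*} [Fintype α] [Fintype β] [DecidableEq α] [DecidableEq β]
    (G : SimpleGraph α) (H : SimpleGraph β)
    (hG : G.Connected) (hH : H.Connected)
    (f₁ : α → ℕ) (hf₁ : IsRDRD G f₁) (hf₁min : ∑ v, f₁ v = gammaRdR G)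
    (f₂ : β → ℕ) (hf₂ : IsRDRD H f₂) (hf₂min : ∑ v, f₂ v = gammaRdR H)
    (A : ℕ → ℕ) (B : ℕ → ℕ)
    (hA : ∀ i, A i = (Finset.univ.filter fun v => f₁ v = i).card)
    (hB : ∀ i, B i = (Finset.univ.filter fun v => f₂ v = i).card) :
    (gammaRdR (strongProd G H) : ℤ) ≤
      (gammaRdR G : ℤ) * gammaRdR H
        - 6 * A 3 * B 3 - 3 * A 3 * B 2 - 2 * A 3 * B 1
        - 3 * A 2 * B 3 - 2 * A 2 * B 2 - A 2 * B 1
        - A 1 * B 2 - 2 * A 1 * B 3 := by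
  have hb1 := hf₁.1
  have hb2 := hf₂.1
  have hle : gammaRdR (strongProd G H) ≤ ∑ p : α × β, gval (f₁ p.1) (f₂ p.2) :=
    Nat.sInf_le ⟨fun p => gval (f₁ p.1) (f₂ p.2), isRDRD_strongProd hf₁ hf₂, rfl⟩
  have hle' : (gammaRdR (strongProd G H) : ℤ) ≤ ∑ p : α × β, (gval (f₁ p.1) (f₂ p.2) : ℤ) := by
    calc (gammaRdR (strongProd G H) : ℤ)
        ≤ ((∑ p : α × β, gval (f₁ p.1) (f₂ p.2) : ℕ) : ℤ) := by exact_mod_cast hle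
      _ = ∑ p : α × β, (gval (f₁ p.1) (f₂ p.2) : ℤ) := by push_cast; rfl
  have hIA : ∀ i : ℕ, (∑ u, (if f₁ u = i then (1:ℤ) else 0)) = A i := by
    intro i; rw [Finset.sum_boole, hA i]
  have hIB : ∀ i : ℕ, (∑ v, (if f₂ v = i then (1:ℤ) else 0)) = B i := by
    intro i; rw [Finset.sum_boole, hB i]
  have key : (gammaRdR G : ℤ) * gammaRdR H =
      (∑ p : α × β, (gval (f₁ p.1) (f₂ p.2) : ℤ))
        + 6 * A 3 * B 3 + 3 * A 3 * B 2 + 2 * A 3 * B 1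
        + 3 * A 2 * B 3 + 2 * A 2 * B 2 + A 2 * B 1
        + A 1 * B 2 + 2 * A 1 * B 3 := by
    have e1 : (gammaRdR G : ℤ) * gammaRdR H = (∑ u, (f₁ u : ℤ)) * (∑ v, (f₂ v : ℤ)) := by
      rw [← hf₁min, ← hf₂min]; push_cast; rfl
    rw [e1, Finset.sum_mul_sum, Fintype.sum_prod_type]
    calc (∑ u, ∑ v, (f₁ u : ℤ) * (f₂ v : ℤ))
        = ∑ u, ∑ v, ((gval (f₁ u) (f₂ v) : ℤ)
          + 6 * ((if f₁ u = 3 then (1:ℤ) else 0) * (if f₂ v = 3 then (1:ℤ) else 0))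
          + 3 * ((if f₁ u = 3 then (1:ℤ) else 0) * (if f₂ v = 2 then (1:ℤ) else 0))
          + 2 * ((if f₁ u = 3 then (1:ℤ) else 0) * (if f₂ v = 1 then (1:ℤ) else 0))
          + 3 * ((if f₁ u = 2 then (1:ℤ) else 0) * (if f₂ v = 3 then (1:ℤ) else 0))
          + 2 * ((if f₁ u = 2 then (1:ℤ) else 0) * (if f₂ v = 2 then (1:ℤ) else 0))
          + ((if f₁ u = 2 then (1:ℤ) else 0) * (if f₂ v = 1 then (1:ℤ) else 0))
          + ((if f₁ u = 1 then (1:ℤ) else 0) * (if f₂ v = 2 then (1:ℤ) else 0))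
          + 2 * ((if f₁ u = 1 then (1:ℤ) else 0) * (if f₂ v = 3 then (1:ℤ) else 0))) :=
          Finset.sum_congr rfl fun u _ => Finset.sum_congr rfl fun v _ =>
            gval_point (f₁ u) (f₂ v) (hb1 u) (hb2 v)
      _ = _ := by
          simp only [Finset.sum_add_distrib, ← Finset.mul_sum, ← Finset.sum_mul]
          rw [hIA 3, hIA 2, hIA 1, hIB 3, hIB 2, hIB 1]
          ring
  linarith
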